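/- Let G = (V,E) be a finite simple graph with |V| = n, let S ⊆ V be an independent set with |S| = k, let H be a real inner product space, and let x* : V → H be an optimal feasible C-SDP solution for G. Then ∑_{(u,v) ∈ S × S} ‖x*_u − x*_v‖² + 2 ∑_{(u,v) ∈ S × (V∖S)} ‖x*_u − x*_v‖² ≤ 4·k·(n − k). -/

import Mathlib

open Finset

/-- A feasible solution to the crude SDP: unit vectors, pairwise nonnegative inner
products, and orthogonal vectors on edges. -/
def Feasible {V : Type*} {H : Type*} [NormedAddCommGroup H] [InnerProductSpace ℝ H]
    (G : SimpleGraph V) (x : V → H) : Prop :=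
  (∀ v, ‖x v‖ = 1) ∧ (∀ u v : V, (0 : ℝ) ≤ inner ℝ (x u) (x v)) ∧
    (∀ u v : V, G.Adj u v → (inner ℝ (x u) (x v) : ℝ) = 0)

/-- The crude SDP objective: the sum of squared distances over all ordered pairs. -/
noncomputable def obj {V : Type*} [Fintype V] {H : Type*} [NormedAddCommGroup H]
    [InnerProductSpace ℝ H] (x : V → H) : ℝ :=
  ∑ u : V, ∑ v : V, ‖x u - x v‖ ^ 2

theorem stmt0 {V : Type*} [Fintype V] [DecidableEq V] (G : SimpleGraph V)
    {H : Type*} [NormedAddCommGroup H] [InnerProductSpace ℝ H]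
    (n k : ℕ) (hn : Fintype.card V = n) (S : Finset V) (hk : S.card = k)
    (hind : ∀ u ∈ S, ∀ v ∈ S, ¬ G.Adj u v)
    (x : V → H) (hfeas : Feasible G x)
    (hopt : ∀ y : V → WithLp 2 (H × ℝ), Feasible G y → obj x ≤ obj y) :
    (∑ u ∈ S, ∑ v ∈ S, ‖x u - x v‖ ^ 2) + 2 * ∑ u ∈ S, ∑ v ∈ Sᶜ, ‖x u - x v‖ ^ 2
      ≤ 4 * (k : ℝ) * ((n : ℝ) - k) := by
  obtain ⟨hnorm, hnn, hedge⟩ := hfeas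
  set y : V → WithLp 2 (H × ℝ) :=
    fun v => (WithLp.equiv 2 (H × ℝ)).symm (if v ∈ S then (0, 1) else (x v, 0)) with hy
  have hyfst : ∀ v, (y v).fst = if v ∈ S then 0 else x v := by
    intro v; simp [hy]; split <;> simp
  have hysnd : ∀ v, (y v).snd = if v ∈ S then 1 else 0 := by
    intro v; simp [hy]; split <;> simp
  have hinner : ∀ u v : V, (inner ℝ (y u) (y v) : ℝ)
      = inner ℝ ((y u).fst) ((y v).fst) + (y u).snd * (y v).snd := by
    intro u v
    rw [WithLp.prod_inner_apply]
    simp [RCLike.inner_apply, mul_comm]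
  have hfeasy : Feasible G y := by
    refine ⟨?_, ?_, ?_⟩
    · intro v
      have h2 : ‖y v‖ ^ 2 = 1 := by
        rw [WithLp.prod_norm_sq_eq_of_L2, hyfst, hysnd]
        split <;> simp [hnorm v]
      nlinarith [norm_nonneg (y v)]
    · intro u v
      rw [hinner, hyfst, hyfst, hysnd, hysnd]
      split <;> split <;> simp [hnn u v]
    · intro u v huv
      rw [hinner, hyfst, hyfst, hysnd, hysnd]
      by_cases hu : u ∈ S <;> by_cases hv : v ∈ S <;>
        simp [hu, hv, hedge u v huv]
      exact absurd huv (hind u hu v hv)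
  have hle := hopt y hfeasy
  -- compute pieces
  have hyy : ∀ u v : V, ‖y u - y v‖ ^ 2
      = ‖(y u).fst - (y v).fst‖ ^ 2 + ((y u).snd - (y v).snd) ^ 2 := by
    intro u v
    rw [show y u - y v = (WithLp.equiv 2 (H × ℝ)).symm ((y u).fst - (y v).fst,
        (y u).snd - (y v).snd) from rfl]
    rw [WithLp.prod_norm_sq_eq_of_L2]
    simp [Real.norm_eq_abs, sq_abs]
  have hSS : ∀ u ∈ S, ∀ v ∈ S, ‖y u - y v‖ ^ 2 = 0 := by
    intro u hu v hv
    rw [hyy, hyfst, hyfst, hysnd, hysnd]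
    simp [hu, hv]
  have hSC : ∀ u v : V, (u ∈ S ∧ v ∉ S) ∨ (u ∉ S ∧ v ∈ S) → ‖y u - y v‖ ^ 2 = 2 := by
    intro u v h
    rw [hyy, hyfst, hyfst, hysnd, hysnd]
    rcases h with ⟨hu, hv⟩ | ⟨hu, hv⟩ <;>
      · simp [hu, hv, norm_neg, hnorm]; ring
  have hCC : ∀ u ∈ Sᶜ, ∀ v ∈ Sᶜ, ‖y u - y v‖ ^ 2 = ‖x u - x v‖ ^ 2 := by
    intro u hu v hv
    rw [Finset.mem_compl] at hu hv
    rw [hyy, hyfst, hyfst, hysnd, hysnd]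
    simp [hu, hv]
  -- split obj into four pieces
  have split : ∀ f : V → V → ℝ, (∀ u v, f u v = f v u) →
      (∑ u : V, ∑ v : V, f u v)
        = (∑ u ∈ S, ∑ v ∈ S, f u v) + 2 * (∑ u ∈ S, ∑ v ∈ Sᶜ, f u v)
          + (∑ u ∈ Sᶜ, ∑ v ∈ Sᶜ, f u v) := by
    intro f hsymm
    have h1 : ∀ u : V, (∑ v : V, f u v) = (∑ v ∈ S, f u v) + ∑ v ∈ Sᶜ, f u v :=
      fun u => (Finset.sum_add_sum_compl S _).symm
    rw [show (∑ u : V, ∑ v : V, f u v)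
        = (∑ u ∈ S, ∑ v : V, f u v) + ∑ u ∈ Sᶜ, ∑ v : V, f u v from
        (Finset.sum_add_sum_compl S _).symm]
    simp only [h1, Finset.sum_add_distrib]
    have hswap : (∑ u ∈ Sᶜ, ∑ v ∈ S, f u v) = ∑ u ∈ S, ∑ v ∈ Sᶜ, f u v := by
      rw [Finset.sum_comm]
      exact Finset.sum_congr rfl fun u _ => Finset.sum_congr rfl fun v _ => hsymm v u
    rw [hswap]; ring
  have symx : ∀ u v : V, ‖x u - x v‖ ^ 2 = ‖x v - x u‖ ^ 2 := by
    intro u v; rw [norm_sub_rev]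
  have symy : ∀ u v : V, ‖y u - y v‖ ^ 2 = ‖y v - y u‖ ^ 2 := by
    intro u v; rw [norm_sub_rev]
  have hobjx : obj x = (∑ u ∈ S, ∑ v ∈ S, ‖x u - x v‖ ^ 2)
      + 2 * (∑ u ∈ S, ∑ v ∈ Sᶜ, ‖x u - x v‖ ^ 2)
      + (∑ u ∈ Sᶜ, ∑ v ∈ Sᶜ, ‖x u - x v‖ ^ 2) := split _ symx
  have hobjy : obj y = 2 * (2 * (k : ℝ) * ((n : ℝ) - k))
      + (∑ u ∈ Sᶜ, ∑ v ∈ Sᶜ, ‖x u - x v‖ ^ 2) := by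
    rw [show obj y = _ from split _ symy]
    have e1 : (∑ u ∈ S, ∑ v ∈ S, ‖y u - y v‖ ^ 2) = 0 :=
      Finset.sum_eq_zero fun u hu => Finset.sum_eq_zero fun v hv => hSS u hu v hv
    have e2 : (∑ u ∈ S, ∑ v ∈ Sᶜ, ‖y u - y v‖ ^ 2) = 2 * (k : ℝ) * ((n : ℝ) - k) := by
      have : ∀ u ∈ S, (∑ v ∈ Sᶜ, ‖y u - y v‖ ^ 2) = (Sᶜ.card : ℝ) * 2 := by
        intro u hu
        rw [Finset.sum_congr rfl fun v hv =>
          hSC u v (Or.inl ⟨hu, (Finset.mem_compl.mp hv)⟩)]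
        simp [mul_comm]
      rw [Finset.sum_congr rfl this, Finset.sum_const, Finset.card_compl, hk, hn]
      have hkn : k ≤ n := by rw [← hn, ← hk]; exact Finset.card_le_card (Finset.subset_univ S)
      push_cast [Nat.cast_sub hkn]
      ring
    have e3 : (∑ u ∈ Sᶜ, ∑ v ∈ Sᶜ, ‖y u - y v‖ ^ 2)
        = ∑ u ∈ Sᶜ, ∑ v ∈ Sᶜ, ‖x u - x v‖ ^ 2 :=
      Finset.sum_congr rfl fun u hu => Finset.sum_congr rfl fun v hv => hCC u hu v hv
    rw [e1, e2, e3]; ring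
  rw [hobjx, hobjy] at hle
  linarith
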